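/- The subalgebras A₁ = ℂH_β⊕ℂX_β⊕ℂX_{−β} and Ã₁ = ℂH_α⊕ℂX_α⊕ℂX_{−α} of G₂ (the long-root and short-root sl₂-triples) are not conjugate: there is no Lie algebra automorphism s of G₂ with s(A₁)=Ã₁. -/

import Mathlib

namespace G2Formal

/-- The positive roots of `G₂`: the pair `(k, l)` encodes `k•α + l•β`,
where `α` is the short simple root and `β` is the long simple root. -/
def PhiP : Set (ℤ × ℤ) := {(1,0), (0,1), (1,1), (2,1), (3,1), (3,2)}

/-- All twelve roots of `G₂`. -/
def Phi : Set (ℤ × ℤ) :=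
  {(1,0), (0,1), (1,1), (2,1), (3,1), (3,2),
   (-1,0), (0,-1), (-1,-1), (-2,-1), (-3,-1), (-3,-2)}

/-- The invariant inner product on the root space, normalized by `(α,α) = 1`,
`(β,β) = 3`, `(α,β) = -3/2`. -/
def ip (μ ν : ℤ × ℤ) : ℚ :=
  (μ.1 * ν.1 : ℤ) - (3/2 : ℚ) * ((μ.1 * ν.2 + μ.2 * ν.1 : ℤ)) + 3 * ((μ.2 * ν.2 : ℤ) : ℚ)

/-- The Cartan pairing `⟨ν, μ^∨⟩ = 2(μ,ν)/(μ,μ)`. -/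
def cart (μ ν : ℤ × ℤ) : ℚ := 2 * ip μ ν / ip μ μ

/-- Base table of structure constants `N_{μ,ν}` from the multiplication table of `G₂`. -/
def N0 (μ ν : ℤ × ℤ) : ℤ :=
  if μ = (0,1) ∧ ν = (1,0) then 1
  else if μ = (0,1) ∧ ν = (3,1) then 1
  else if μ = (3,1) ∧ ν = (-3,-2) then 1
  else if μ = (2,1) ∧ ν = (-3,-1) then 1
  else if μ = (2,1) ∧ ν = (-3,-2) then 1
  else if μ = (-3,-2) ∧ ν = (1,1) then 1
  else if μ = (-3,-2) ∧ ν = (0,1) then 1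
  else if μ = (-3,-1) ∧ ν = (1,0) then 1
  else if μ = (-1,-1) ∧ ν = (0,1) then 1
  else if μ = (1,1) ∧ ν = (1,0) then 2
  else if μ = (1,0) ∧ ν = (-2,-1) then 2
  else if μ = (-2,-1) ∧ ν = (1,1) then 2
  else if μ = (1,0) ∧ ν = (2,1) then 3
  else if μ = (1,0) ∧ ν = (-1,-1) then 3
  else if μ = (1,1) ∧ ν = (2,1) then 3
  else 0

/-- The full table of structure constants, obtained from the base table via
`N_{μ,ν} = -N_{ν,μ} = -N_{-μ,-ν}`. -/
def Nc (μ ν : ℤ × ℤ) : ℤ := N0 μ ν - N0 ν μ - N0 (-μ) (-ν) + N0 (-ν) (-μ)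

variable {L : Type*} [LieRing L] [LieAlgebra ℂ L]

/-- The coroot `H_μ` expressed in the basis `H_α`, `H_β` of the Cartan subalgebra. -/
noncomputable def Hr (Hα Hβ : L) (μ : ℤ × ℤ) : L :=
  ((((μ.1 : ℚ) / ip μ μ : ℚ) : ℂ)) • Hα + ((((3 * μ.2 : ℚ) / ip μ μ : ℚ) : ℂ)) • Hβ

/-- The Chevalley basis of `G₂` as a family indexed by `Fin 14`. -/
def chev (Hα Hβ : L) (X : ℤ × ℤ → L) : Fin 14 → L :=
  ![Hα, Hβ, X (1,0), X (-1,0), X (0,1), X (0,-1), X (1,1), X (-1,-1),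
    X (2,1), X (-2,-1), X (3,1), X (-3,-1), X (3,2), X (-3,-2)]

/-- `IsG2 Hα Hβ X` says that the complex Lie algebra `L`, together with the elements
`Hα`, `Hβ` and the root vectors `X γ` (for `γ` a root of `G₂`), realizes the multiplication
table of the simple complex Lie algebra of type `G₂` in its Chevalley basis, and that the
fourteen Chevalley basis vectors form a basis of `L`.  Any such `L` is a copy of `G₂`. -/
structure IsG2 (Hα Hβ : L) (X : ℤ × ℤ → L) : Prop where
  indep : LinearIndependent ℂ (chev Hα Hβ X)
  span_top : Submodule.span ℂ (Set.range (chev Hα Hβ X)) = ⊤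
  bracket_hh : ⁅Hα, Hβ⁆ = 0
  bracket_hx : ∀ μ ∈ Phi, ∀ ν ∈ Phi, ⁅Hr Hα Hβ μ, X ν⁆ = ((cart μ ν : ℚ) : ℂ) • X ν
  bracket_xnegx : ∀ μ ∈ Phi, ⁅X μ, X (-μ)⁆ = Hr Hα Hβ μ
  bracket_xx : ∀ μ ∈ Phi, ∀ ν ∈ Phi, μ + ν ∈ Phi →
    ⁅X μ, X ν⁆ = ((Nc μ ν : ℤ) : ℂ) • X (μ + ν)
  bracket_xx_zero : ∀ μ ∈ Phi, ∀ ν ∈ Phi, μ + ν ≠ 0 → μ + ν ∉ Phi → ⁅X μ, X ν⁆ = 0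

/-- Two Lie subalgebras of `L` are conjugate if some Lie algebra automorphism of `L`
maps one onto the other. -/
def SubalgConj (g k : LieSubalgebra ℂ L) : Prop :=
  ∃ s : L ≃ₗ⁅ℂ⁆ L, g.map s.toLieHom = k

/-- A submodule is conjugate (as a subalgebra) to a given submodule if some Lie algebra
automorphism of `L` maps it onto the latter. -/
def ModConj (W W' : Submodule ℂ L) : Prop :=
  ∃ s : L ≃ₗ⁅ℂ⁆ L, W.map (s.toLinearEquiv : L →ₗ[ℂ] L) = W'

/-- A Lie subalgebra of `G₂` is *regular* if it is conjugate to a subalgebra of the form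
`g(Σ, W) = W ⊕ ⊕_{γ ∈ Σ} ℂ X_γ` where `Σ ⊆ Φ` is closed and `W` is a subspace of the
Cartan subalgebra containing `[X_γ, X_{-γ}]` for every `γ ∈ Σ ∩ (-Σ)`. -/
def IsRegularSubalgebra (Hα Hβ : L) (X : ℤ × ℤ → L) (g : LieSubalgebra ℂ L) : Prop :=
  ∃ (S : Set (ℤ × ℤ)) (W : Submodule ℂ L) (k : LieSubalgebra ℂ L),
    S ⊆ Phi ∧
    (∀ x ∈ S, ∀ y ∈ S, x + y ∈ Phi → x + y ∈ S) ∧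
    W ≤ Submodule.span ℂ {Hα, Hβ} ∧
    (∀ γ ∈ S, -γ ∈ S → ⁅X γ, X (-γ)⁆ ∈ W) ∧
    k.toSubmodule = W ⊔ Submodule.span ℂ (X '' S) ∧
    SubalgConj g k

/-- A Levi subalgebra of a Lie algebra `g`: a semisimple subalgebra which is a vector
space complement of the solvable radical. -/
def IsLeviOf (g : LieSubalgebra ℂ L) (m : LieSubalgebra ℂ ↥g) : Prop :=
  LieAlgebra.IsSemisimple ℂ ↥m ∧
  IsCompl m.toSubmodule (LieAlgebra.radical ℂ ↥g).toSubmodule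


section Aux

variable {L : Type*} [LieRing L] [LieAlgebra ℂ L] {Hα Hβ : L} {X : ℤ × ℤ → L}

lemma mem_Phi_iff {p : ℤ × ℤ} : p ∈ Phi ↔ (p = (1,0) ∨ p = (0,1) ∨ p = (1,1) ∨ p = (2,1) ∨
    p = (3,1) ∨ p = (3,2) ∨ p = (-1,0) ∨ p = (0,-1) ∨ p = (-1,-1) ∨ p = (-2,-1) ∨
    p = (-3,-1) ∨ p = (-3,-2)) := by
  simp only [Phi, Set.mem_insert_iff, Set.mem_singleton_iff]

lemma hrA : Hr Hα Hβ ((1,0) : ℤ × ℤ) = Hα := by norm_num [Hr, ip]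

lemma hrAm : Hr Hα Hβ ((-1,0) : ℤ × ℤ) = (-1 : ℂ) • Hα := by norm_num [Hr, ip]

lemma hrB : Hr Hα Hβ ((0,1) : ℤ × ℤ) = Hβ := by norm_num [Hr, ip]

lemma lie_Ha (h : IsG2 Hα Hβ X) {ν : ℤ × ℤ} (hν : ν ∈ Phi) :
    ⁅Hα, X ν⁆ = ((cart (1,0) ν : ℚ) : ℂ) • X ν := by
  have e := h.bracket_hx (1,0) (mem_Phi_iff.mpr (by decide)) ν hν
  rwa [hrA] at e

lemma lie_Hb (h : IsG2 Hα Hβ X) {ν : ℤ × ℤ} (hν : ν ∈ Phi) :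
    ⁅Hβ, X ν⁆ = ((cart (0,1) ν : ℚ) : ℂ) • X ν := by
  have e := h.bracket_hx (0,1) (mem_Phi_iff.mpr (by decide)) ν hν
  rwa [hrB] at e

lemma lA0 (_h : IsG2 Hα Hβ X) : ⁅Hα, (Hα : L)⁆ = 0 := lie_self _

lemma lA1 (h : IsG2 Hα Hβ X) : ⁅Hα, (Hβ : L)⁆ = 0 := h.bracket_hh

lemma lB0 (h : IsG2 Hα Hβ X) : ⁅Hβ, (Hα : L)⁆ = 0 := by
  rw [← lie_skew, h.bracket_hh, neg_zero]

lemma lB1 (_h : IsG2 Hα Hβ X) : ⁅Hβ, (Hβ : L)⁆ = 0 := lie_self _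


lemma lA2 (h : IsG2 Hα Hβ X) : ⁅Hα, X (1,0)⁆ = (2 : ℂ) • X (1,0) := by
  rw [lie_Ha h (mem_Phi_iff.mpr (by decide))]; norm_num [cart, ip]

lemma lA3 (h : IsG2 Hα Hβ X) : ⁅Hα, X (-1,0)⁆ = (-2 : ℂ) • X (-1,0) := by
  rw [lie_Ha h (mem_Phi_iff.mpr (by decide))]; norm_num [cart, ip]

lemma lA4 (h : IsG2 Hα Hβ X) : ⁅Hα, X (0,1)⁆ = (-3 : ℂ) • X (0,1) := by
  rw [lie_Ha h (mem_Phi_iff.mpr (by decide))]; norm_num [cart, ip]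

lemma lA5 (h : IsG2 Hα Hβ X) : ⁅Hα, X (0,-1)⁆ = (3 : ℂ) • X (0,-1) := by
  rw [lie_Ha h (mem_Phi_iff.mpr (by decide))]; norm_num [cart, ip]

lemma lA6 (h : IsG2 Hα Hβ X) : ⁅Hα, X (1,1)⁆ = (-1 : ℂ) • X (1,1) := by
  rw [lie_Ha h (mem_Phi_iff.mpr (by decide))]; norm_num [cart, ip]

lemma lA7 (h : IsG2 Hα Hβ X) : ⁅Hα, X (-1,-1)⁆ = (1 : ℂ) • X (-1,-1) := by
  rw [lie_Ha h (mem_Phi_iff.mpr (by decide))]; norm_num [cart, ip]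

lemma lA8 (h : IsG2 Hα Hβ X) : ⁅Hα, X (2,1)⁆ = (1 : ℂ) • X (2,1) := by
  rw [lie_Ha h (mem_Phi_iff.mpr (by decide))]; norm_num [cart, ip]

lemma lA9 (h : IsG2 Hα Hβ X) : ⁅Hα, X (-2,-1)⁆ = (-1 : ℂ) • X (-2,-1) := by
  rw [lie_Ha h (mem_Phi_iff.mpr (by decide))]; norm_num [cart, ip]

lemma lA10 (h : IsG2 Hα Hβ X) : ⁅Hα, X (3,1)⁆ = (3 : ℂ) • X (3,1) := by
  rw [lie_Ha h (mem_Phi_iff.mpr (by decide))]; norm_num [cart, ip]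

lemma lA11 (h : IsG2 Hα Hβ X) : ⁅Hα, X (-3,-1)⁆ = (-3 : ℂ) • X (-3,-1) := by
  rw [lie_Ha h (mem_Phi_iff.mpr (by decide))]; norm_num [cart, ip]

lemma lA12 (h : IsG2 Hα Hβ X) : ⁅Hα, X (3,2)⁆ = 0 := by
  rw [lie_Ha h (mem_Phi_iff.mpr (by decide))]; norm_num [cart, ip]

lemma lA13 (h : IsG2 Hα Hβ X) : ⁅Hα, X (-3,-2)⁆ = 0 := by
  rw [lie_Ha h (mem_Phi_iff.mpr (by decide))]; norm_num [cart, ip]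

lemma lB2 (h : IsG2 Hα Hβ X) : ⁅Hβ, X (1,0)⁆ = (-1 : ℂ) • X (1,0) := by
  rw [lie_Hb h (mem_Phi_iff.mpr (by decide))]; norm_num [cart, ip]

lemma lB3 (h : IsG2 Hα Hβ X) : ⁅Hβ, X (-1,0)⁆ = (1 : ℂ) • X (-1,0) := by
  rw [lie_Hb h (mem_Phi_iff.mpr (by decide))]; norm_num [cart, ip]

lemma lB4 (h : IsG2 Hα Hβ X) : ⁅Hβ, X (0,1)⁆ = (2 : ℂ) • X (0,1) := by
  rw [lie_Hb h (mem_Phi_iff.mpr (by decide))]; norm_num [cart, ip]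

lemma lB5 (h : IsG2 Hα Hβ X) : ⁅Hβ, X (0,-1)⁆ = (-2 : ℂ) • X (0,-1) := by
  rw [lie_Hb h (mem_Phi_iff.mpr (by decide))]; norm_num [cart, ip]

lemma lB6 (h : IsG2 Hα Hβ X) : ⁅Hβ, X (1,1)⁆ = (1 : ℂ) • X (1,1) := by
  rw [lie_Hb h (mem_Phi_iff.mpr (by decide))]; norm_num [cart, ip]

lemma lB7 (h : IsG2 Hα Hβ X) : ⁅Hβ, X (-1,-1)⁆ = (-1 : ℂ) • X (-1,-1) := by
  rw [lie_Hb h (mem_Phi_iff.mpr (by decide))]; norm_num [cart, ip]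

lemma lB8 (h : IsG2 Hα Hβ X) : ⁅Hβ, X (2,1)⁆ = 0 := by
  rw [lie_Hb h (mem_Phi_iff.mpr (by decide))]; norm_num [cart, ip]

lemma lB9 (h : IsG2 Hα Hβ X) : ⁅Hβ, X (-2,-1)⁆ = 0 := by
  rw [lie_Hb h (mem_Phi_iff.mpr (by decide))]; norm_num [cart, ip]

lemma lB10 (h : IsG2 Hα Hβ X) : ⁅Hβ, X (3,1)⁆ = (-1 : ℂ) • X (3,1) := by
  rw [lie_Hb h (mem_Phi_iff.mpr (by decide))]; norm_num [cart, ip]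

lemma lB11 (h : IsG2 Hα Hβ X) : ⁅Hβ, X (-3,-1)⁆ = (1 : ℂ) • X (-3,-1) := by
  rw [lie_Hb h (mem_Phi_iff.mpr (by decide))]; norm_num [cart, ip]

lemma lB12 (h : IsG2 Hα Hβ X) : ⁅Hβ, X (3,2)⁆ = (1 : ℂ) • X (3,2) := by
  rw [lie_Hb h (mem_Phi_iff.mpr (by decide))]; norm_num [cart, ip]

lemma lB13 (h : IsG2 Hα Hβ X) : ⁅Hβ, X (-3,-2)⁆ = (-1 : ℂ) • X (-3,-2) := by
  rw [lie_Hb h (mem_Phi_iff.mpr (by decide))]; norm_num [cart, ip]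

lemma lX0 (h : IsG2 Hα Hβ X) : ⁅X (1,0), (Hα : L)⁆ = (-2 : ℂ) • X (1,0) := by
  rw [← lie_skew, lA2 h]; module

lemma lX1 (h : IsG2 Hα Hβ X) : ⁅X (1,0), (Hβ : L)⁆ = X (1,0) := by
  rw [← lie_skew, lB2 h]; module

lemma lX2 (_h : IsG2 Hα Hβ X) : ⁅X (1,0), X (1,0)⁆ = (0 : L) := lie_self _

lemma lX3 (h : IsG2 Hα Hβ X) : ⁅X (1,0), X (-1,0)⁆ = Hα := by
  have e := h.bracket_xnegx (1,0) (mem_Phi_iff.mpr (by decide))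
  rw [show (-((1,0) : ℤ × ℤ)) = (-1,0) by decide, hrA] at e
  exact e

lemma lX4 (h : IsG2 Hα Hβ X) : ⁅X (1,0), X (0,1)⁆ = (-1 : ℂ) • X (1,1) := by
  rw [h.bracket_xx (1,0) (mem_Phi_iff.mpr (by decide)) (0,1) (mem_Phi_iff.mpr (by decide)) (mem_Phi_iff.mpr (by decide)),
    show (((1,0) : ℤ × ℤ) + (0,1)) = (1,1) by decide, show Nc (1,0) (0,1) = -1 by decide]
  norm_num

lemma lX5 (h : IsG2 Hα Hβ X) : ⁅X (1,0), X (0,-1)⁆ = 0 :=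
  h.bracket_xx_zero (1,0) (mem_Phi_iff.mpr (by decide)) (0,-1) (mem_Phi_iff.mpr (by decide)) (by decide) (fun hm => absurd (mem_Phi_iff.mp hm) (by decide))

lemma lX6 (h : IsG2 Hα Hβ X) : ⁅X (1,0), X (1,1)⁆ = (-2 : ℂ) • X (2,1) := by
  rw [h.bracket_xx (1,0) (mem_Phi_iff.mpr (by decide)) (1,1) (mem_Phi_iff.mpr (by decide)) (mem_Phi_iff.mpr (by decide)),
    show (((1,0) : ℤ × ℤ) + (1,1)) = (2,1) by decide, show Nc (1,0) (1,1) = -2 by decide]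
  norm_num

lemma lX7 (h : IsG2 Hα Hβ X) : ⁅X (1,0), X (-1,-1)⁆ = (3 : ℂ) • X (0,-1) := by
  rw [h.bracket_xx (1,0) (mem_Phi_iff.mpr (by decide)) (-1,-1) (mem_Phi_iff.mpr (by decide)) (mem_Phi_iff.mpr (by decide)),
    show (((1,0) : ℤ × ℤ) + (-1,-1)) = (0,-1) by decide, show Nc (1,0) (-1,-1) = 3 by decide]
  norm_num

lemma lX8 (h : IsG2 Hα Hβ X) : ⁅X (1,0), X (2,1)⁆ = (3 : ℂ) • X (3,1) := by
  rw [h.bracket_xx (1,0) (mem_Phi_iff.mpr (by decide)) (2,1) (mem_Phi_iff.mpr (by decide)) (mem_Phi_iff.mpr (by decide)),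
    show (((1,0) : ℤ × ℤ) + (2,1)) = (3,1) by decide, show Nc (1,0) (2,1) = 3 by decide]
  norm_num

lemma lX9 (h : IsG2 Hα Hβ X) : ⁅X (1,0), X (-2,-1)⁆ = (2 : ℂ) • X (-1,-1) := by
  rw [h.bracket_xx (1,0) (mem_Phi_iff.mpr (by decide)) (-2,-1) (mem_Phi_iff.mpr (by decide)) (mem_Phi_iff.mpr (by decide)),
    show (((1,0) : ℤ × ℤ) + (-2,-1)) = (-1,-1) by decide, show Nc (1,0) (-2,-1) = 2 by decide]
  norm_num

lemma lX10 (h : IsG2 Hα Hβ X) : ⁅X (1,0), X (3,1)⁆ = 0 :=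
  h.bracket_xx_zero (1,0) (mem_Phi_iff.mpr (by decide)) (3,1) (mem_Phi_iff.mpr (by decide)) (by decide) (fun hm => absurd (mem_Phi_iff.mp hm) (by decide))

lemma lX11 (h : IsG2 Hα Hβ X) : ⁅X (1,0), X (-3,-1)⁆ = (-1 : ℂ) • X (-2,-1) := by
  rw [h.bracket_xx (1,0) (mem_Phi_iff.mpr (by decide)) (-3,-1) (mem_Phi_iff.mpr (by decide)) (mem_Phi_iff.mpr (by decide)),
    show (((1,0) : ℤ × ℤ) + (-3,-1)) = (-2,-1) by decide, show Nc (1,0) (-3,-1) = -1 by decide]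
  norm_num

lemma lX12 (h : IsG2 Hα Hβ X) : ⁅X (1,0), X (3,2)⁆ = 0 :=
  h.bracket_xx_zero (1,0) (mem_Phi_iff.mpr (by decide)) (3,2) (mem_Phi_iff.mpr (by decide)) (by decide) (fun hm => absurd (mem_Phi_iff.mp hm) (by decide))

lemma lX13 (h : IsG2 Hα Hβ X) : ⁅X (1,0), X (-3,-2)⁆ = 0 :=
  h.bracket_xx_zero (1,0) (mem_Phi_iff.mpr (by decide)) (-3,-2) (mem_Phi_iff.mpr (by decide)) (by decide) (fun hm => absurd (mem_Phi_iff.mp hm) (by decide))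

lemma lY0 (h : IsG2 Hα Hβ X) : ⁅X (-1,0), (Hα : L)⁆ = (2 : ℂ) • X (-1,0) := by
  rw [← lie_skew, lA3 h]; module

lemma lY1 (h : IsG2 Hα Hβ X) : ⁅X (-1,0), (Hβ : L)⁆ = (-1 : ℂ) • X (-1,0) := by
  rw [← lie_skew, lB3 h]; module

lemma lY2 (h : IsG2 Hα Hβ X) : ⁅X (-1,0), X (1,0)⁆ = (-1 : ℂ) • Hα := by
  have e := h.bracket_xnegx (-1,0) (mem_Phi_iff.mpr (by decide))
  rw [show (-((-1,0) : ℤ × ℤ)) = (1,0) by decide, hrAm] at e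
  exact e

lemma lY3 (_h : IsG2 Hα Hβ X) : ⁅X (-1,0), X (-1,0)⁆ = (0 : L) := lie_self _

lemma lY4 (h : IsG2 Hα Hβ X) : ⁅X (-1,0), X (0,1)⁆ = 0 :=
  h.bracket_xx_zero (-1,0) (mem_Phi_iff.mpr (by decide)) (0,1) (mem_Phi_iff.mpr (by decide)) (by decide) (fun hm => absurd (mem_Phi_iff.mp hm) (by decide))

lemma lY5 (h : IsG2 Hα Hβ X) : ⁅X (-1,0), X (0,-1)⁆ = (1 : ℂ) • X (-1,-1) := by
  rw [h.bracket_xx (-1,0) (mem_Phi_iff.mpr (by decide)) (0,-1) (mem_Phi_iff.mpr (by decide)) (mem_Phi_iff.mpr (by decide)),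
    show (((-1,0) : ℤ × ℤ) + (0,-1)) = (-1,-1) by decide, show Nc (-1,0) (0,-1) = 1 by decide]
  norm_num

lemma lY6 (h : IsG2 Hα Hβ X) : ⁅X (-1,0), X (1,1)⁆ = (-3 : ℂ) • X (0,1) := by
  rw [h.bracket_xx (-1,0) (mem_Phi_iff.mpr (by decide)) (1,1) (mem_Phi_iff.mpr (by decide)) (mem_Phi_iff.mpr (by decide)),
    show (((-1,0) : ℤ × ℤ) + (1,1)) = (0,1) by decide, show Nc (-1,0) (1,1) = -3 by decide]
  norm_num

lemma lY7 (h : IsG2 Hα Hβ X) : ⁅X (-1,0), X (-1,-1)⁆ = (2 : ℂ) • X (-2,-1) := by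
  rw [h.bracket_xx (-1,0) (mem_Phi_iff.mpr (by decide)) (-1,-1) (mem_Phi_iff.mpr (by decide)) (mem_Phi_iff.mpr (by decide)),
    show (((-1,0) : ℤ × ℤ) + (-1,-1)) = (-2,-1) by decide, show Nc (-1,0) (-1,-1) = 2 by decide]
  norm_num

lemma lY8 (h : IsG2 Hα Hβ X) : ⁅X (-1,0), X (2,1)⁆ = (-2 : ℂ) • X (1,1) := by
  rw [h.bracket_xx (-1,0) (mem_Phi_iff.mpr (by decide)) (2,1) (mem_Phi_iff.mpr (by decide)) (mem_Phi_iff.mpr (by decide)),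
    show (((-1,0) : ℤ × ℤ) + (2,1)) = (1,1) by decide, show Nc (-1,0) (2,1) = -2 by decide]
  norm_num

lemma lY9 (h : IsG2 Hα Hβ X) : ⁅X (-1,0), X (-2,-1)⁆ = (-3 : ℂ) • X (-3,-1) := by
  rw [h.bracket_xx (-1,0) (mem_Phi_iff.mpr (by decide)) (-2,-1) (mem_Phi_iff.mpr (by decide)) (mem_Phi_iff.mpr (by decide)),
    show (((-1,0) : ℤ × ℤ) + (-2,-1)) = (-3,-1) by decide, show Nc (-1,0) (-2,-1) = -3 by decide]
  norm_num

lemma lY10 (h : IsG2 Hα Hβ X) : ⁅X (-1,0), X (3,1)⁆ = (1 : ℂ) • X (2,1) := by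
  rw [h.bracket_xx (-1,0) (mem_Phi_iff.mpr (by decide)) (3,1) (mem_Phi_iff.mpr (by decide)) (mem_Phi_iff.mpr (by decide)),
    show (((-1,0) : ℤ × ℤ) + (3,1)) = (2,1) by decide, show Nc (-1,0) (3,1) = 1 by decide]
  norm_num

lemma lY11 (h : IsG2 Hα Hβ X) : ⁅X (-1,0), X (-3,-1)⁆ = 0 :=
  h.bracket_xx_zero (-1,0) (mem_Phi_iff.mpr (by decide)) (-3,-1) (mem_Phi_iff.mpr (by decide)) (by decide) (fun hm => absurd (mem_Phi_iff.mp hm) (by decide))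

lemma lY12 (h : IsG2 Hα Hβ X) : ⁅X (-1,0), X (3,2)⁆ = 0 :=
  h.bracket_xx_zero (-1,0) (mem_Phi_iff.mpr (by decide)) (3,2) (mem_Phi_iff.mpr (by decide)) (by decide) (fun hm => absurd (mem_Phi_iff.mp hm) (by decide))

lemma lY13 (h : IsG2 Hα Hβ X) : ⁅X (-1,0), X (-3,-2)⁆ = 0 :=
  h.bracket_xx_zero (-1,0) (mem_Phi_iff.mpr (by decide)) (-3,-2) (mem_Phi_iff.mpr (by decide)) (by decide) (fun hm => absurd (mem_Phi_iff.mp hm) (by decide))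


noncomputable def Bb (h : IsG2 Hα Hβ X) : Module.Basis (Fin 14) ℂ L :=
  Module.Basis.mk h.indep h.span_top.ge

lemma Bv0 (h : IsG2 Hα Hβ X) : Bb h 0 = Hα := Module.Basis.mk_apply _ _ 0
lemma Bv1 (h : IsG2 Hα Hβ X) : Bb h 1 = Hβ := Module.Basis.mk_apply _ _ 1
lemma Bv2 (h : IsG2 Hα Hβ X) : Bb h 2 = X (1,0) := Module.Basis.mk_apply _ _ 2
lemma Bv3 (h : IsG2 Hα Hβ X) : Bb h 3 = X (-1,0) := Module.Basis.mk_apply _ _ 3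
lemma Bv4 (h : IsG2 Hα Hβ X) : Bb h 4 = X (0,1) := Module.Basis.mk_apply _ _ 4
lemma Bv5 (h : IsG2 Hα Hβ X) : Bb h 5 = X (0,-1) := Module.Basis.mk_apply _ _ 5
lemma Bv6 (h : IsG2 Hα Hβ X) : Bb h 6 = X (1,1) := Module.Basis.mk_apply _ _ 6
lemma Bv7 (h : IsG2 Hα Hβ X) : Bb h 7 = X (-1,-1) := Module.Basis.mk_apply _ _ 7
lemma Bv8 (h : IsG2 Hα Hβ X) : Bb h 8 = X (2,1) := Module.Basis.mk_apply _ _ 8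
lemma Bv9 (h : IsG2 Hα Hβ X) : Bb h 9 = X (-2,-1) := Module.Basis.mk_apply _ _ 9
lemma Bv10 (h : IsG2 Hα Hβ X) : Bb h 10 = X (3,1) := Module.Basis.mk_apply _ _ 10
lemma Bv11 (h : IsG2 Hα Hβ X) : Bb h 11 = X (-3,-1) := Module.Basis.mk_apply _ _ 11
lemma Bv12 (h : IsG2 Hα Hβ X) : Bb h 12 = X (3,2) := Module.Basis.mk_apply _ _ 12
lemma Bv13 (h : IsG2 Hα Hβ X) : Bb h 13 = X (-3,-2) := Module.Basis.mk_apply _ _ 13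

lemma rv0 (h : IsG2 Hα Hβ X) : (Bb h).repr Hα = Finsupp.single 0 1 := by
  have e := (Bb h).repr_self 0; rwa [Bv0 h] at e
lemma rv1 (h : IsG2 Hα Hβ X) : (Bb h).repr Hβ = Finsupp.single 1 1 := by
  have e := (Bb h).repr_self 1; rwa [Bv1 h] at e
lemma rv2 (h : IsG2 Hα Hβ X) : (Bb h).repr (X (1,0)) = Finsupp.single 2 1 := by
  have e := (Bb h).repr_self 2; rwa [Bv2 h] at e
lemma rv3 (h : IsG2 Hα Hβ X) : (Bb h).repr (X (-1,0)) = Finsupp.single 3 1 := by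
  have e := (Bb h).repr_self 3; rwa [Bv3 h] at e
lemma rv4 (h : IsG2 Hα Hβ X) : (Bb h).repr (X (0,1)) = Finsupp.single 4 1 := by
  have e := (Bb h).repr_self 4; rwa [Bv4 h] at e
lemma rv5 (h : IsG2 Hα Hβ X) : (Bb h).repr (X (0,-1)) = Finsupp.single 5 1 := by
  have e := (Bb h).repr_self 5; rwa [Bv5 h] at e
lemma rv6 (h : IsG2 Hα Hβ X) : (Bb h).repr (X (1,1)) = Finsupp.single 6 1 := by
  have e := (Bb h).repr_self 6; rwa [Bv6 h] at e
lemma rv7 (h : IsG2 Hα Hβ X) : (Bb h).repr (X (-1,-1)) = Finsupp.single 7 1 := by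
  have e := (Bb h).repr_self 7; rwa [Bv7 h] at e
lemma rv8 (h : IsG2 Hα Hβ X) : (Bb h).repr (X (2,1)) = Finsupp.single 8 1 := by
  have e := (Bb h).repr_self 8; rwa [Bv8 h] at e
lemma rv9 (h : IsG2 Hα Hβ X) : (Bb h).repr (X (-2,-1)) = Finsupp.single 9 1 := by
  have e := (Bb h).repr_self 9; rwa [Bv9 h] at e
lemma rv10 (h : IsG2 Hα Hβ X) : (Bb h).repr (X (3,1)) = Finsupp.single 10 1 := by
  have e := (Bb h).repr_self 10; rwa [Bv10 h] at e
lemma rv11 (h : IsG2 Hα Hβ X) : (Bb h).repr (X (-3,-1)) = Finsupp.single 11 1 := by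
  have e := (Bb h).repr_self 11; rwa [Bv11 h] at e
lemma rv12 (h : IsG2 Hα Hβ X) : (Bb h).repr (X (3,2)) = Finsupp.single 12 1 := by
  have e := (Bb h).repr_self 12; rwa [Bv12 h] at e
lemma rv13 (h : IsG2 Hα Hβ X) : (Bb h).repr (X (-3,-2)) = Finsupp.single 13 1 := by
  have e := (Bb h).repr_self 13; rwa [Bv13 h] at e

lemma fin14_sum {M : Type*} [AddCommMonoid M] (f : Fin 14 → M) :
    ∑ i, f i = f 0 + f 1 + f 2 + f 3 + f 4 + f 5 + f 6 + f 7 + f 8 + f 9 + f 10 + f 11 +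
      f 12 + f 13 := by
  rw [Fin.sum_univ_castSucc (n := 13), Fin.sum_univ_castSucc (n := 12),
    Fin.sum_univ_castSucc (n := 11), Fin.sum_univ_castSucc (n := 10),
    Fin.sum_univ_castSucc (n := 9), Fin.sum_univ_castSucc (n := 8), Fin.sum_univ_eight]
  rfl

lemma trace_ad_ad (h : IsG2 Hα Hβ X) (x y : L) :
    LinearMap.trace ℂ L (LieAlgebra.ad ℂ L x * LieAlgebra.ad ℂ L y) =
      ∑ i : Fin 14, (Bb h).repr ⁅x, ⁅y, Bb h i⁆⁆ i := by
  rw [LinearMap.trace_eq_matrix_trace ℂ (Bb h), Matrix.trace]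
  simp [Matrix.diag, LinearMap.toMatrix_apply, LieAlgebra.ad_apply, Module.End.mul_apply]

lemma K_HbHb (h : IsG2 Hα Hβ X) :
    LinearMap.trace ℂ L (LieAlgebra.ad ℂ L Hβ * LieAlgebra.ad ℂ L Hβ) = 16 := by
  rw [trace_ad_ad h, fin14_sum]
  simp only [Bv0 h, Bv1 h, Bv2 h, Bv3 h, Bv4 h, Bv5 h, Bv6 h, Bv7 h, Bv8 h, Bv9 h, Bv10 h,
    Bv11 h, Bv12 h, Bv13 h, lB0 h, lB1 h, lB2 h, lB3 h, lB4 h, lB5 h, lB6 h, lB7 h, lB8 h,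
    lB9 h, lB10 h, lB11 h, lB12 h, lB13 h, lie_smul, lie_zero, smul_zero, map_smul, map_zero,
    rv0 h, rv1 h, rv2 h, rv3 h, rv4 h, rv5 h, rv6 h, rv7 h, rv8 h, rv9 h, rv10 h, rv11 h,
    rv12 h, rv13 h, Finsupp.smul_apply, Finsupp.single_apply, Finsupp.coe_zero, Pi.zero_apply]
  norm_num

lemma K_HaHa (h : IsG2 Hα Hβ X) :
    LinearMap.trace ℂ L (LieAlgebra.ad ℂ L Hα * LieAlgebra.ad ℂ L Hα) = 48 := by
  rw [trace_ad_ad h, fin14_sum]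
  simp only [Bv0 h, Bv1 h, Bv2 h, Bv3 h, Bv4 h, Bv5 h, Bv6 h, Bv7 h, Bv8 h, Bv9 h, Bv10 h,
    Bv11 h, Bv12 h, Bv13 h, lA0 h, lA1 h, lA2 h, lA3 h, lA4 h, lA5 h, lA6 h, lA7 h, lA8 h,
    lA9 h, lA10 h, lA11 h, lA12 h, lA13 h, lie_smul, lie_zero, smul_zero, map_smul, map_zero,
    rv0 h, rv1 h, rv2 h, rv3 h, rv4 h, rv5 h, rv6 h, rv7 h, rv8 h, rv9 h, rv10 h, rv11 h,
    rv12 h, rv13 h, Finsupp.smul_apply, Finsupp.single_apply, Finsupp.coe_zero, Pi.zero_apply]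
  simp
  try norm_num

lemma K_HaXa (h : IsG2 Hα Hβ X) :
    LinearMap.trace ℂ L (LieAlgebra.ad ℂ L Hα * LieAlgebra.ad ℂ L (X (1,0))) = 0 := by
  rw [trace_ad_ad h, fin14_sum]
  simp only [Bv0 h, Bv1 h, Bv2 h, Bv3 h, Bv4 h, Bv5 h, Bv6 h, Bv7 h, Bv8 h, Bv9 h, Bv10 h,
    Bv11 h, Bv12 h, Bv13 h, lA0 h, lA1 h, lA2 h, lA3 h, lA4 h, lA5 h, lA6 h, lA7 h, lA8 h,
    lA9 h, lA10 h, lA11 h, lA12 h, lA13 h, lX0 h, lX1 h, lX2 h, lX3 h, lX4 h, lX5 h, lX6 h,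
    lX7 h, lX8 h, lX9 h, lX10 h, lX11 h, lX12 h, lX13 h,
    lie_smul, lie_zero, smul_zero, map_smul, map_zero,
    rv0 h, rv1 h, rv2 h, rv3 h, rv4 h, rv5 h, rv6 h, rv7 h, rv8 h, rv9 h, rv10 h, rv11 h,
    rv12 h, rv13 h, Finsupp.smul_apply, Finsupp.single_apply, Finsupp.coe_zero, Pi.zero_apply]
  simp
  try norm_num

lemma K_HaXma (h : IsG2 Hα Hβ X) :
    LinearMap.trace ℂ L (LieAlgebra.ad ℂ L Hα * LieAlgebra.ad ℂ L (X (-1,0))) = 0 := by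
  rw [trace_ad_ad h, fin14_sum]
  simp only [Bv0 h, Bv1 h, Bv2 h, Bv3 h, Bv4 h, Bv5 h, Bv6 h, Bv7 h, Bv8 h, Bv9 h, Bv10 h,
    Bv11 h, Bv12 h, Bv13 h, lA0 h, lA1 h, lA2 h, lA3 h, lA4 h, lA5 h, lA6 h, lA7 h, lA8 h,
    lA9 h, lA10 h, lA11 h, lA12 h, lA13 h, lY0 h, lY1 h, lY2 h, lY3 h, lY4 h, lY5 h, lY6 h,
    lY7 h, lY8 h, lY9 h, lY10 h, lY11 h, lY12 h, lY13 h,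
    lie_smul, lie_zero, smul_zero, map_smul, map_zero, lie_neg, neg_smul, smul_neg, map_neg,
    rv0 h, rv1 h, rv2 h, rv3 h, rv4 h, rv5 h, rv6 h, rv7 h, rv8 h, rv9 h, rv10 h, rv11 h,
    rv12 h, rv13 h, Finsupp.smul_apply, Finsupp.single_apply, Finsupp.coe_zero, Pi.zero_apply,
    Finsupp.neg_apply]
  simp
  try norm_num

lemma K_XaXa (h : IsG2 Hα Hβ X) :
    LinearMap.trace ℂ L (LieAlgebra.ad ℂ L (X (1,0)) * LieAlgebra.ad ℂ L (X (1,0))) = 0 := by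
  rw [trace_ad_ad h, fin14_sum]
  simp only [Bv0 h, Bv1 h, Bv2 h, Bv3 h, Bv4 h, Bv5 h, Bv6 h, Bv7 h, Bv8 h, Bv9 h, Bv10 h,
    Bv11 h, Bv12 h, Bv13 h, lX0 h, lX1 h, lX2 h, lX3 h, lX4 h, lX5 h, lX6 h,
    lX7 h, lX8 h, lX9 h, lX10 h, lX11 h, lX12 h, lX13 h,
    lie_smul, lie_zero, smul_zero, map_smul, map_zero, lie_neg, neg_smul, smul_neg, map_neg,
    rv0 h, rv1 h, rv2 h, rv3 h, rv4 h, rv5 h, rv6 h, rv7 h, rv8 h, rv9 h, rv10 h, rv11 h,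
    rv12 h, rv13 h, Finsupp.smul_apply, Finsupp.single_apply, Finsupp.coe_zero, Pi.zero_apply,
    Finsupp.neg_apply]
  simp
  try norm_num

lemma K_XmaXma (h : IsG2 Hα Hβ X) :
    LinearMap.trace ℂ L (LieAlgebra.ad ℂ L (X (-1,0)) * LieAlgebra.ad ℂ L (X (-1,0))) = 0 := by
  rw [trace_ad_ad h, fin14_sum]
  simp only [Bv0 h, Bv1 h, Bv2 h, Bv3 h, Bv4 h, Bv5 h, Bv6 h, Bv7 h, Bv8 h, Bv9 h, Bv10 h,
    Bv11 h, Bv12 h, Bv13 h, lY0 h, lY1 h, lY2 h, lY3 h, lY4 h, lY5 h, lY6 h,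
    lY7 h, lY8 h, lY9 h, lY10 h, lY11 h, lY12 h, lY13 h,
    lie_smul, lie_zero, smul_zero, map_smul, map_zero, lie_neg, neg_smul, smul_neg, map_neg,
    rv0 h, rv1 h, rv2 h, rv3 h, rv4 h, rv5 h, rv6 h, rv7 h, rv8 h, rv9 h, rv10 h, rv11 h,
    rv12 h, rv13 h, Finsupp.smul_apply, Finsupp.single_apply, Finsupp.coe_zero, Pi.zero_apply,
    Finsupp.neg_apply]
  simp
  try norm_num

lemma K_XaXma (h : IsG2 Hα Hβ X) :
    LinearMap.trace ℂ L (LieAlgebra.ad ℂ L (X (1,0)) * LieAlgebra.ad ℂ L (X (-1,0))) = 24 := by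
  rw [trace_ad_ad h, fin14_sum]
  simp only [Bv0 h, Bv1 h, Bv2 h, Bv3 h, Bv4 h, Bv5 h, Bv6 h, Bv7 h, Bv8 h, Bv9 h, Bv10 h,
    Bv11 h, Bv12 h, Bv13 h, lX0 h, lX1 h, lX2 h, lX3 h, lX4 h, lX5 h, lX6 h,
    lX7 h, lX8 h, lX9 h, lX10 h, lX11 h, lX12 h, lX13 h, lY0 h, lY1 h, lY2 h, lY3 h, lY4 h,
    lY5 h, lY6 h, lY7 h, lY8 h, lY9 h, lY10 h, lY11 h, lY12 h, lY13 h,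
    lie_smul, lie_zero, smul_zero, map_smul, map_zero, lie_neg, neg_smul, smul_neg, map_neg,
    rv0 h, rv1 h, rv2 h, rv3 h, rv4 h, rv5 h, rv6 h, rv7 h, rv8 h, rv9 h, rv10 h, rv11 h,
    rv12 h, rv13 h, Finsupp.smul_apply, Finsupp.single_apply, Finsupp.coe_zero, Pi.zero_apply,
    Finsupp.neg_apply]
  simp
  try norm_num

lemma ad_conj (s : L ≃ₗ⁅ℂ⁆ L) (x : L) :
    LieAlgebra.ad ℂ L (s x) = s.toLinearEquiv.conj (LieAlgebra.ad ℂ L x) := by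
  ext w
  simp only [LieAlgebra.ad_apply, LinearEquiv.conj_apply, LinearMap.comp_apply,
    LinearEquiv.coe_coe]
  show ⁅s x, w⁆ = s ⁅x, s.symm w⁆
  conv_lhs => rw [← s.apply_symm_apply w]
  exact (LieEquiv.map_lie s x (s.symm w)).symm

lemma K_conj (s : L ≃ₗ⁅ℂ⁆ L) (x y : L) :
    LinearMap.trace ℂ L (LieAlgebra.ad ℂ L (s x) * LieAlgebra.ad ℂ L (s y)) =
      LinearMap.trace ℂ L (LieAlgebra.ad ℂ L x * LieAlgebra.ad ℂ L y) := by
  rw [ad_conj s x, ad_conj s y, Module.End.mul_eq_comp, ← LinearEquiv.conj_comp,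
    ← Module.End.mul_eq_comp, LinearMap.trace_conj']

lemma K_combo (h : IsG2 Hα Hβ X) (a b c : ℂ) :
    LinearMap.trace ℂ L (LieAlgebra.ad ℂ L (a • Hα + b • X (1,0) + c • X (-1,0)) *
      LieAlgebra.ad ℂ L (a • Hα + b • X (1,0) + c • X (-1,0))) = 48 * (a ^ 2 + b * c) := by
  simp only [map_add, map_smul, add_mul, mul_add, smul_mul_assoc, mul_smul_comm,
    map_add, map_smul, smul_smul]
  rw [K_HaHa h, K_HaXa h, K_HaXma h, K_XaXa h, K_XaXma h, K_XmaXma h,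
    LinearMap.trace_mul_comm ℂ (LieAlgebra.ad ℂ L (X (1,0))) (LieAlgebra.ad ℂ L Hα),
    LinearMap.trace_mul_comm ℂ (LieAlgebra.ad ℂ L (X (-1,0))) (LieAlgebra.ad ℂ L Hα),
    LinearMap.trace_mul_comm ℂ (LieAlgebra.ad ℂ L (X (-1,0))) (LieAlgebra.ad ℂ L (X (1,0))),
    K_HaXa h, K_HaXma h, K_XaXma h]
  simp only [smul_eq_mul]; ring

lemma mem_triple {u v w x : L} (hx : x ∈ Submodule.span ℂ ({u, v, w} : Set L)) :
    ∃ a b c : ℂ, x = a • u + b • v + c • w := by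
  rw [Submodule.mem_span_insert] at hx
  obtain ⟨a, z, hz, rfl⟩ := hx
  rw [Submodule.mem_span_insert] at hz
  obtain ⟨b, z', hz', rfl⟩ := hz
  rw [Submodule.mem_span_singleton] at hz'
  obtain ⟨c, rfl⟩ := hz'
  exact ⟨a, b, c, by module⟩

lemma coeff_zero (h : IsG2 Hα Hβ X) {c0 c1 c2 : ℂ}
    (e : c0 • Hα + c1 • X (1,0) + c2 • X (-1,0) = 0) : c0 = 0 ∧ c1 = 0 ∧ c2 = 0 := by
  have h3 : LinearIndependent ℂ ![Hα, X (1,0), X (-1,0)] := by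
    have hcomp := h.indep.comp (![0, 2, 3] : Fin 3 → Fin 14) (by decide)
    have hfun : chev Hα Hβ X ∘ (![0, 2, 3] : Fin 3 → Fin 14) = ![Hα, X (1,0), X (-1,0)] := by
      funext i; fin_cases i <;> rfl
    rwa [hfun] at hcomp
  have := Fintype.linearIndependent_iff.mp h3 ![c0, c1, c2] ?_
  · exact ⟨this 0, this 1, this 2⟩
  · rw [Fin.sum_univ_three]
    simpa using e

end Aux

/-- **Theorem.**  The long-root subalgebra `A₁ = ℂH_β ⊕ ℂX_β ⊕ ℂX_{-β}` and the short-root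
subalgebra `Ã₁ = ℂH_α ⊕ ℂX_α ⊕ ℂX_{-α}` of `G₂` are not conjugate: no automorphism of `G₂`
maps one onto the other. -/
theorem A1_not_conjugate_to_tildeA1
    {L : Type*} [LieRing L] [LieAlgebra ℂ L] (Hα Hβ : L) (X : ℤ × ℤ → L)
    (hG2 : IsG2 Hα Hβ X) :
    ¬ ModConj (Submodule.span ℂ {Hβ, X (0,1), X (0,-1)})
        (Submodule.span ℂ {Hα, X (1,0), X (-1,0)}) := by
  rintro ⟨s, hmap⟩
  have hHmem : s Hβ ∈ Submodule.span ℂ ({Hα, X (1,0), X (-1,0)} : Set L) := by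
    rw [← hmap]
    exact Submodule.mem_map.mpr ⟨Hβ, Submodule.subset_span (by simp), rfl⟩
  have hEmem : s (X (0,1)) ∈ Submodule.span ℂ ({Hα, X (1,0), X (-1,0)} : Set L) := by
    rw [← hmap]
    exact Submodule.mem_map.mpr ⟨X (0,1), Submodule.subset_span (by simp), rfl⟩
  obtain ⟨a, b, c, hh⟩ := mem_triple hHmem
  obtain ⟨a2, b2, c2, he⟩ := mem_triple hEmem
  have hrel : ⁅s Hβ, s (X (0,1))⁆ = (2 : ℂ) • s (X (0,1)) := by
    rw [← LieEquiv.map_lie, lB4 hG2]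
    exact s.toLinearEquiv.map_smul 2 _
  rw [hh, he] at hrel
  have h0 : (b*c2 - c*b2 - 2*a2) • Hα + (2*a*b2 - 2*a2*b - 2*b2) • X (1,0) +
      (2*a2*c - 2*a*c2 - 2*c2) • X (-1,0) = 0 := by
    simp only [lie_add, add_lie, lie_smul, smul_lie, lA0 hG2, lA2 hG2, lA3 hG2,
      lX0 hG2, lX2 hG2, lX3 hG2, lY0 hG2, lY2 hG2, lY3 hG2, smul_zero, zero_add, add_zero,
      smul_smul, lie_self] at hrel
    linear_combination (norm := module) hrel
  obtain ⟨E1, E2, E3⟩ := coeff_zero hG2 h0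
  have eq1 : b*c2 - c*b2 = 2*a2 := by linear_combination E1
  have eq2 : a*b2 - a2*b = b2 := by linear_combination E2 / 2
  have eq3 : a2*c - a*c2 = c2 := by linear_combination E3 / 2
  have hXb : X (0,1) ≠ 0 := hG2.indep.ne_zero 4
  have hsne : s (X (0,1)) ≠ 0 := fun hz => hXb (by
    have := s.toLinearEquiv.map_eq_zero_iff.mp hz
    simpa using this)
  have hq : a ^ 2 + b * c = 1 := by
    by_contra hq
    have ga : a2 = 0 := by
      have hz : (a ^ 2 + b * c - 1) * a2 = 0 := by
        linear_combination ((1 - a^2)/2) * eq1 + (-(1 + a)*c/2) * eq2 + (b*(1 - a)/2) * eq3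
      rcases mul_eq_zero.mp hz with h' | h'
      · exact absurd (by linear_combination h') hq
      · exact h'
    have gb : b2 = 0 := by
      have hz : (a ^ 2 + b * c - 1) * b2 = 0 := by
        linear_combination (-b*(1 + a)/2) * eq1 + ((1 + a) - b*c/2) * eq2 + (-b^2/2) * eq3
      rcases mul_eq_zero.mp hz with h' | h'
      · exact absurd (by linear_combination h') hq
      · exact h'
    have gc : c2 = 0 := by
      have hz : (a ^ 2 + b * c - 1) * c2 = 0 := by
        linear_combination (c*(1 - a)/2) * eq1 + (-c^2/2) * eq2 + ((1 - a) - b*c/2) * eq3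
      rcases mul_eq_zero.mp hz with h' | h'
      · exact absurd (by linear_combination h') hq
      · exact h'
    rw [ga, gb, gc] at he
    simp only [zero_smul, add_zero, zero_add] at he
    exact hsne he
  have hK := K_conj s Hβ Hβ
  rw [K_HbHb hG2, hh, K_combo hG2, hq] at hK
  norm_num at hK


end G2Formal
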